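/- Let m be an integer, let q₀ be a squarefree positive integer, and let R₀ be a finite set of integers. Then for every positive integer q, f(q) = ∑_{d ∣ q} g(d) · h(q/d); that is, f is the Dirichlet convolution of g and h. -/

import Mathlib

/-- `e(x) = exp(2πix)`. -/
noncomputable def e (x : ℝ) : ℂ := Complex.exp (2 * (Real.pi : ℂ) * Complex.I * (x : ℂ))

/-- `(μ/φ)(n) = μ(n)/φ(n)`. -/
noncomputable def muphi (n : ℕ) : ℂ :=
  ((ArithmeticFunction.moebius n : ℤ) : ℂ) / (Nat.totient n : ℂ)

/-- `f(q) = q₀⁻³ ∑_{1 ≤ a ≤ q, (a,q)=1} e(-am/q)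
  (∑_{ℓ=0}^{q₀-1} (μ/φ)(qq₀/gcd(qq₀, aq₀+ℓq)) ∑_{r ∈ R₀} e(-ℓr/q₀))³`. -/
noncomputable def f (m : ℤ) (q₀ : ℕ) (R₀ : Finset ℤ) (q : ℕ) : ℂ :=
  ((q₀ : ℂ) ^ 3)⁻¹ * ∑ a ∈ (Finset.Icc 1 q).filter (fun a => Nat.gcd a q = 1),
    e (-((a : ℝ) * (m : ℝ) / (q : ℝ))) *
      (∑ ℓ ∈ Finset.range q₀,
        muphi ((q * q₀) / Nat.gcd (q * q₀) (a * q₀ + ℓ * q)) *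
          ∑ r ∈ R₀, e (-((ℓ : ℝ) * (r : ℝ) / (q₀ : ℝ)))) ^ 3

/-- `g(w) = 0` unless `w ∣ q₀`, in which case
`g(w) = q₀⁻³ ∑_{1 ≤ a ≤ w, (a,w)=1} e(-am/w)
  (∑_{ℓ=0}^{q₀-1} (μ/φ)(q₀/gcd(q₀, a(q₀/w)+ℓ)) ∑_{r ∈ R₀} e(-ℓr/q₀))³`. -/
noncomputable def g (m : ℤ) (q₀ : ℕ) (R₀ : Finset ℤ) (w : ℕ) : ℂ :=
  if w ∣ q₀ then
    ((q₀ : ℂ) ^ 3)⁻¹ * ∑ a ∈ (Finset.Icc 1 w).filter (fun a => Nat.gcd a w = 1),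
      e (-((a : ℝ) * (m : ℝ) / (w : ℝ))) *
        (∑ ℓ ∈ Finset.range q₀,
          muphi (q₀ / Nat.gcd q₀ (a * (q₀ / w) + ℓ)) *
            ∑ r ∈ R₀, e (-((ℓ : ℝ) * (r : ℝ) / (q₀ : ℝ)))) ^ 3
  else 0

/-- `h(v) = 0` if `gcd(v, q₀) > 1`, and otherwise
`h(v) = (μ(v)/φ(v)³) ∑_{1 ≤ a ≤ v, (a,v)=1} e(-am/v)`. -/
noncomputable def h (m : ℤ) (q₀ : ℕ) (v : ℕ) : ℂ :=
  if 1 < Nat.gcd v q₀ then 0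
  else ((ArithmeticFunction.moebius v : ℤ) : ℂ) / (Nat.totient v : ℂ) ^ 3 *
    ∑ a ∈ (Finset.Icc 1 v).filter (fun a => Nat.gcd a v = 1),
      e (-((a : ℝ) * (m : ℝ) / (v : ℝ)))

lemma e_add (x y : ℝ) : e (x + y) = e x * e y := by
  simp only [e, ← Complex.exp_add]; push_cast; ring_nf

lemma e_int (n : ℤ) : e n = 1 := by
  rw [e, show 2 * (Real.pi : ℂ) * Complex.I * ((n:ℝ) : ℂ) = (n:ℤ) * (2 * Real.pi * Complex.I) by push_cast; ring]
  exact Complex.exp_int_mul_two_pi_mul_I n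

lemma e_add_int (x : ℝ) (n : ℤ) : e (x + n) = e x := by
  rw [e_add, e_int, mul_one]

lemma gcd_eq_of_modEq {n a b : ℕ} (h : a ≡ b [MOD n]) : Nat.gcd n a = Nat.gcd n b := by
  rw [Nat.gcd_rec n a, Nat.gcd_rec n b, h]

lemma sum_coprime_Icc_eq_range (q : ℕ) (hq : 0 < q) (F : ℕ → ℂ)
    (hF : ∀ a, F (a % q) = F a) :
    ∑ a ∈ (Finset.Icc 1 q).filter (fun a => Nat.gcd a q = 1), F a
      = ∑ a ∈ (Finset.range q).filter (fun a => Nat.gcd a q = 1), F a := by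
  apply Finset.sum_nbij' (fun a => a % q) (fun b => if b = 0 then q else b)
  · intro a ha
    simp only [Finset.mem_filter, Finset.mem_Icc] at ha
    simp only [Finset.mem_filter, Finset.mem_range]
    refine ⟨Nat.mod_lt _ hq, ?_⟩
    rw [← Nat.gcd_rec, Nat.gcd_comm]; exact ha.2
  · intro b hb
    simp only [Finset.mem_filter, Finset.mem_range] at hb
    simp only [Finset.mem_filter, Finset.mem_Icc]
    by_cases h0 : b = 0
    · subst h0
      simp only [Nat.gcd_zero_left] at hb
      simp only [if_pos rfl]
      refine ⟨⟨hq, le_refl q⟩, ?_⟩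
      simp [hb.2]
    · rw [if_neg h0]; exact ⟨⟨Nat.one_le_iff_ne_zero.2 h0, le_of_lt hb.1⟩, hb.2⟩
  · intro a ha
    simp only [Finset.mem_filter, Finset.mem_Icc] at ha
    by_cases hlt : a = q
    · subst hlt; simp
    · rw [Nat.mod_eq_of_lt (by omega), if_neg (by omega)]
  · intro b hb
    simp only [Finset.mem_filter, Finset.mem_range] at hb
    by_cases h0 : b = 0
    · subst h0; simp
    · rw [if_neg h0, Nat.mod_eq_of_lt hb.1]
  · intro a ha; exact (hF a).symm

lemma muphi_mul {a b : ℕ} (h : Nat.Coprime a b) : muphi (a * b) = muphi a * muphi b := by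
  unfold muphi
  rw [ArithmeticFunction.isMultiplicative_moebius.map_mul_of_coprime h, Nat.totient_mul h]
  push_cast
  rw [div_mul_div_comm]

lemma moebius_sq_or (v : ℕ) : (ArithmeticFunction.moebius v : ℤ) = 1 ∨
    (ArithmeticFunction.moebius v : ℤ) = -1 ∨ (ArithmeticFunction.moebius v : ℤ) = 0 := by
  by_cases hv : Squarefree v
  · rw [ArithmeticFunction.moebius_apply_of_squarefree hv]
    rcases Nat.even_or_odd (ArithmeticFunction.cardFactors v) with he | ho
    · left; exact he.neg_one_pow
    · right; left; exact ho.neg_one_pow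
  · right; right; exact ArithmeticFunction.moebius_eq_zero_of_not_squarefree hv

lemma muphi_cube (v : ℕ) :
    (muphi v) ^ 3 = ((ArithmeticFunction.moebius v : ℤ) : ℂ) / (Nat.totient v : ℂ) ^ 3 := by
  unfold muphi
  rw [div_pow]
  congr 1
  rcases moebius_sq_or v with h | h | h <;> rw [h] <;> norm_num

lemma exists_inverse {v n : ℕ} (h : Nat.Coprime v n) : ∃ u, v * u ≡ 1 [MOD n] := by
  rcases Nat.lt_or_ge 1 n with hn | hn
  · obtain ⟨u, -, hu⟩ := Nat.exists_mul_mod_eq_one_of_coprime h hn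
    exact ⟨u, by unfold Nat.ModEq; rw [hu, Nat.mod_eq_of_lt hn]⟩
  · interval_cases n
    · refine ⟨1, ?_⟩
      rw [Nat.coprime_zero_right] at h
      simp [h, Nat.ModEq]
    · exact ⟨0, Nat.modEq_one⟩

lemma real_mod_aux (A R Tq M Q : ℝ) (hQ : Q ≠ 0) (h : A = Q * Tq + R) :
    -(R * M / Q) = -(A * M / Q) + Tq * M := by
  rw [h]; field_simp; ring

lemma real_split_aux (A B C T M W V : ℝ) (hW : W ≠ 0) (hV : V ≠ 0)
    (h : (B * V + C * W) - A = T * (W * V)) :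
    -(A * M / (W * V)) = (-(B * M / W) + -(C * M / V)) + T * M := by
  have hA : A = B * V + C * W - T * (W * V) := by linarith
  rw [hA]; field_simp; ring

lemma e_neg_mod (q : ℕ) (hq : 0 < q) (m : ℤ) (a : ℕ) :
    e (-(((a % q : ℕ) : ℝ) * m / q)) = e (-((a : ℝ) * m / q)) := by
  have hd : a = q * (a / q) + a % q := (Nat.div_add_mod a q).symm
  have hqR : (q : ℝ) ≠ 0 := Nat.cast_ne_zero.2 hq.ne'
  have hd' : (a : ℝ) = q * ((a / q : ℕ) : ℝ) + ((a % q : ℕ) : ℝ) := by exact_mod_cast hd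
  have key := real_mod_aux (a : ℝ) ((a % q : ℕ) : ℝ) ((a / q : ℕ) : ℝ) (m : ℝ) (q : ℝ) hqR hd'
  have hcast : (((a / q : ℕ) * m : ℤ) : ℝ) = ((a / q : ℕ) : ℝ) * (m : ℝ) := by rw [Int.cast_mul, Int.cast_natCast]
  rw [show -(((a % q : ℕ) : ℝ) * m / q) = -((a : ℝ) * m / q) + (((a / q : ℕ) * m : ℤ) : ℝ) by
    rw [hcast]; exact key, e_add_int]

lemma e_split (w v : ℕ) (hw : 0 < w) (hv : 0 < v) (m : ℤ) (a b c : ℕ) (T : ℤ)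
    (hT : ((b : ℤ) * v + c * w) - a = T * (w * v)) :
    e (-((a : ℝ) * m / ((w * v : ℕ) : ℝ))) = e (-((b : ℝ) * m / w)) * e (-((c : ℝ) * m / v)) := by
  have hwR : (w : ℝ) ≠ 0 := Nat.cast_ne_zero.2 hw.ne'
  have hvR : (v : ℝ) ≠ 0 := Nat.cast_ne_zero.2 hv.ne'
  have hT' : ((b : ℝ) * v + c * w) - a = (T : ℝ) * (w * v) := by exact_mod_cast hT
  have key := real_split_aux (a : ℝ) (b : ℝ) (c : ℝ) (T : ℝ) (m : ℝ) (w : ℝ) (v : ℝ) hwR hvR hT'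
  have hcast : ((T * m : ℤ) : ℝ) = (T : ℝ) * (m : ℝ) := by push_cast; ring
  rw [show -((a : ℝ) * m / ((w * v : ℕ) : ℝ))
      = (-((b : ℝ) * m / w) + -((c : ℝ) * m / v)) + ((T * m : ℤ) : ℝ) by
    rw [hcast, Nat.cast_mul]; exact key, e_add_int, e_add]

lemma crt_sum (q₀ : ℕ) (hq₀ : 0 < q₀) (m : ℤ) (R₀ : Finset ℤ)
    (w v : ℕ) (hw : 0 < w) (hv : 0 < v) (hwq₀ : w ∣ q₀) (hvq₀ : Nat.Coprime v q₀) :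
    ∑ a ∈ (Finset.range (w*v)).filter (fun a => Nat.gcd a (w*v) = 1),
      e (-((a:ℝ)*(m:ℝ)/((w*v : ℕ):ℝ))) *
        (∑ ℓ ∈ Finset.range q₀, muphi (((w*v)*q₀)/Nat.gcd ((w*v)*q₀) (a*q₀+ℓ*(w*v))) *
          ∑ r ∈ R₀, e (-((ℓ:ℝ)*(r:ℝ)/(q₀:ℝ))))^3
    = (∑ b ∈ (Finset.range w).filter (fun b => Nat.gcd b w = 1),
        e (-((b:ℝ)*(m:ℝ)/(w:ℝ))) * (∑ ℓ ∈ Finset.range q₀, muphi (q₀/Nat.gcd q₀ (b*(q₀/w)+ℓ)) *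
          ∑ r ∈ R₀, e (-((ℓ:ℝ)*(r:ℝ)/(q₀:ℝ))))^3)
      * (((ArithmeticFunction.moebius v : ℤ):ℂ)/(Nat.totient v : ℂ)^3
        * ∑ c ∈ (Finset.range v).filter (fun c => Nat.gcd c v = 1), e (-((c:ℝ)*(m:ℝ)/(v:ℝ)))) := by
  classical
  have hvw : Nat.Coprime v w := hvq₀.coprime_dvd_right hwq₀
  have hwv : Nat.Coprime w v := hvw.symm
  obtain ⟨vinv, hvinv⟩ := exists_inverse hvw
  obtain ⟨winv, hwinv⟩ := exists_inverse hwv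
  have hvwq₀ : Nat.Coprime v (w * q₀) := Nat.Coprime.mul_right hvw hvq₀
  obtain ⟨U, hU⟩ := exists_inverse hvwq₀
  have hUco : Nat.Coprime U (w * q₀) :=
    Nat.coprime_of_mul_modEq_one v (by rw [mul_comm U v]; exact hU)
  have hUw : v * U ≡ 1 [MOD w] := hU.of_dvd (dvd_mul_right w q₀)
  -- CRT congruence for the forward map
  have key : ∀ a : ℕ, Nat.Coprime a (w*v) →
      (a * vinv % w) * v + (a * winv % v) * w ≡ a [MOD w*v] := by
    intro a hacop
    have hbv : (a * vinv % w) * v ≡ a [MOD w] := by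
      have h1 : (a * vinv % w) * v ≡ a * vinv * v [MOD w] :=
        (Nat.mod_modEq (a * vinv) w).mul_right v
      have h2 : a * vinv * v ≡ a [MOD w] := by
        have := hvinv.mul_left a
        rw [mul_one] at this
        calc a * vinv * v = a * (v * vinv) := by ring
        _ ≡ a [MOD w] := this
      exact h1.trans h2
    have hcw : (a * winv % v) * w ≡ a [MOD v] := by
      have h1 : (a * winv % v) * w ≡ a * winv * w [MOD v] :=
        (Nat.mod_modEq (a * winv) v).mul_right w
      have h2 : a * winv * w ≡ a [MOD v] := by
        have := hwinv.mul_left a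
        rw [mul_one] at this
        calc a * winv * w = a * (w * winv) := by ring
        _ ≡ a [MOD v] := this
      exact h1.trans h2
    rw [← Nat.modEq_and_modEq_iff_modEq_mul hwv]
    constructor
    · have h0 : (a * winv % v) * w ≡ 0 [MOD w] := (dvd_mul_left w _).modEq_zero_nat
      simpa using hbv.add h0
    · have h0 : (a * vinv % w) * v ≡ 0 [MOD v] := (dvd_mul_left v _).modEq_zero_nat
      simpa using h0.add hcw
  -- the main pointwise identity
  have main : ∀ a : ℕ, Nat.Coprime a (w*v) →
      e (-((a:ℝ)*(m:ℝ)/((w*v : ℕ):ℝ))) *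
        (∑ ℓ ∈ Finset.range q₀, muphi (((w*v)*q₀)/Nat.gcd ((w*v)*q₀) (a*q₀+ℓ*(w*v))) *
          ∑ r ∈ R₀, e (-((ℓ:ℝ)*(r:ℝ)/(q₀:ℝ))))^3
      = (e (-(((a * vinv % w : ℕ):ℝ)*(m:ℝ)/(w:ℝ))) *
          (∑ ℓ ∈ Finset.range q₀, muphi (q₀/Nat.gcd q₀ ((a * vinv % w)*(q₀/w)+ℓ)) *
            ∑ r ∈ R₀, e (-((ℓ:ℝ)*(r:ℝ)/(q₀:ℝ))))^3)
        * (((ArithmeticFunction.moebius v : ℤ):ℂ)/(Nat.totient v : ℂ)^3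
          * e (-(((a * winv % v : ℕ):ℝ)*(m:ℝ)/(v:ℝ)))) := by
    intro a hacop
    set b := a * vinv % w with hbdef
    set c := a * winv % v with hcdef
    have hcrt := key a hacop
    have hav : Nat.Coprime a v := (Nat.coprime_mul_iff_right.mp hacop).2
    -- the exponential part
    obtain ⟨t, ht⟩ := (Nat.modEq_iff_dvd.mp hcrt)
    have hesplit : e (-((a:ℝ)*(m:ℝ)/((w*v : ℕ):ℝ)))
        = e (-((b:ℝ)*(m:ℝ)/(w:ℝ))) * e (-((c:ℝ)*(m:ℝ)/(v:ℝ))) := by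
      refine e_split w v hw hv m a b c (-t) ?_
      have ht' : (a : ℤ) - (b * v + c * w) = (w*v) * t := by exact_mod_cast ht
      push_cast at ht' ⊢
      linarith
    -- the gcd part
    have hgcd : ∀ ℓ : ℕ, muphi (((w*v)*q₀)/Nat.gcd ((w*v)*q₀) (a*q₀+ℓ*(w*v)))
        = muphi v * muphi (q₀/Nat.gcd q₀ (b*(q₀/w)+ℓ)) := by
      intro ℓ
      set x := a*q₀+ℓ*(w*v) with hxdef
      -- v is coprime to x
      have hvx : Nat.Coprime v x := by
        have hmod : x ≡ a * q₀ [MOD v] := by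
          have h0 : ℓ*(w*v) ≡ 0 [MOD v] :=
            (show v ∣ ℓ*(w*v) from ⟨ℓ*w, by ring⟩).modEq_zero_nat
          have := (Nat.ModEq.refl (a*q₀)).add h0
          rwa [add_zero] at this
        have h1 : Nat.Coprime v (a*q₀) := Nat.Coprime.mul_right hav.symm hvq₀
        unfold Nat.Coprime
        rw [gcd_eq_of_modEq hmod]
        exact h1
      have step1 : Nat.gcd ((w*v)*q₀) x = Nat.gcd (w*q₀) x := by
        rw [show (w*v)*q₀ = v*(w*q₀) by ring]
        exact Nat.Coprime.gcd_mul_left_cancel (w*q₀) hvx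
      have hUa : U * a ≡ b [MOD w] := by
        have hUvinv : U ≡ vinv [MOD w] := by
          calc U = U * 1 := (mul_one U).symm
          _ ≡ U * (v * vinv) [MOD w] := (hvinv.mul_left U).symm
          _ = vinv * (v * U) := by ring
          _ ≡ vinv * 1 [MOD w] := hUw.mul_left vinv
          _ = vinv := mul_one vinv
        calc U * a ≡ vinv * a [MOD w] := hUvinv.mul_right a
        _ = a * vinv := mul_comm _ _
        _ ≡ b [MOD w] := (Nat.mod_modEq _ w).symm
      have hmod2 : U * x ≡ b*q₀ + ℓ*w [MOD w*q₀] := by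
        have part1 : (U*a)*q₀ ≡ b*q₀ [MOD w*q₀] := hUa.mul_right' q₀
        have part2 : ℓ*w*(v*U) ≡ ℓ*w [MOD w*q₀] := by
          have h2 := hU.mul_left (ℓ*w)
          rwa [mul_one] at h2
        calc U * x = (U*a)*q₀ + ℓ*w*(v*U) := by rw [hxdef]; ring
        _ ≡ b*q₀ + ℓ*w [MOD w*q₀] := part1.add part2
      have step2 : Nat.gcd (w*q₀) x = Nat.gcd (w*q₀) (b*q₀ + ℓ*w) := by
        rw [← Nat.Coprime.gcd_mul_left_cancel_right x hUco]
        exact gcd_eq_of_modEq hmod2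
      have hq₀w : w * (q₀/w) = q₀ := Nat.mul_div_cancel' hwq₀
      have step3 : b*q₀ + ℓ*w = w*(b*(q₀/w)+ℓ) := by
        rw [show w*(b*(q₀/w)+ℓ) = b*(w*(q₀/w)) + ℓ*w by ring, hq₀w]
      have step4 : Nat.gcd (w*q₀) (w*(b*(q₀/w)+ℓ)) = w * Nat.gcd q₀ (b*(q₀/w)+ℓ) :=
        Nat.gcd_mul_left w q₀ _
      have hG : Nat.gcd q₀ (b*(q₀/w)+ℓ) ∣ q₀ := Nat.gcd_dvd_left _ _
      have step5 : ((w*v)*q₀) / (w * Nat.gcd q₀ (b*(q₀/w)+ℓ))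
          = v * (q₀ / Nat.gcd q₀ (b*(q₀/w)+ℓ)) := by
        rw [show (w*v)*q₀ = w*(v*q₀) by ring, Nat.mul_div_mul_left (v*q₀) _ hw,
          Nat.mul_div_assoc v hG]
      rw [step1, step2, step3, step4, step5]
      exact muphi_mul (hvq₀.coprime_dvd_right (Nat.div_dvd_of_dvd hG))
    -- assemble the pointwise identity
    have hsum : (∑ ℓ ∈ Finset.range q₀,
          muphi (((w*v)*q₀)/Nat.gcd ((w*v)*q₀) (a*q₀+ℓ*(w*v))) *
          ∑ r ∈ R₀, e (-((ℓ:ℝ)*(r:ℝ)/(q₀:ℝ))))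
        = muphi v * ∑ ℓ ∈ Finset.range q₀, muphi (q₀/Nat.gcd q₀ (b*(q₀/w)+ℓ)) *
            ∑ r ∈ R₀, e (-((ℓ:ℝ)*(r:ℝ)/(q₀:ℝ))) := by
      rw [Finset.mul_sum]
      refine Finset.sum_congr rfl (fun ℓ _ => ?_)
      rw [hgcd ℓ, mul_assoc]
    rw [hsum, hesplit, mul_pow, muphi_cube]
    ring
  -- restructure the right-hand side as a sum over a product set
  rw [show (((ArithmeticFunction.moebius v : ℤ):ℂ)/(Nat.totient v : ℂ)^3
        * ∑ c ∈ (Finset.range v).filter (fun c => Nat.gcd c v = 1), e (-((c:ℝ)*(m:ℝ)/(v:ℝ))))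
      = ∑ c ∈ (Finset.range v).filter (fun c => Nat.gcd c v = 1),
          ((ArithmeticFunction.moebius v : ℤ):ℂ)/(Nat.totient v : ℂ)^3 * e (-((c:ℝ)*(m:ℝ)/(v:ℝ)))
      from Finset.mul_sum _ _ _]
  rw [Finset.sum_mul_sum]
  rw [← Finset.sum_product']
  apply Finset.sum_nbij' (fun a => (a * vinv % w, a * winv % v))
    (fun p => (p.1 * v + p.2 * w) % (w * v))
  · -- forward membership
    intro a ha
    simp only [Finset.mem_filter, Finset.mem_range] at ha
    obtain ⟨halt, hacop⟩ := ha
    have haw : Nat.Coprime a w := (Nat.coprime_mul_iff_right.mp hacop).1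
    have hav : Nat.Coprime a v := (Nat.coprime_mul_iff_right.mp hacop).2
    simp only [Finset.mem_product, Finset.mem_filter, Finset.mem_range]
    constructor
    · refine ⟨Nat.mod_lt _ hw, ?_⟩
      have h1 : Nat.Coprime (a * vinv) w :=
        Nat.Coprime.mul haw (Nat.coprime_of_mul_modEq_one v (by rw [mul_comm vinv v]; exact hvinv))
      rw [Nat.gcd_comm, gcd_eq_of_modEq (Nat.mod_modEq (a * vinv) w), Nat.gcd_comm]
      exact h1
    · refine ⟨Nat.mod_lt _ hv, ?_⟩
      have h1 : Nat.Coprime (a * winv) v :=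
        Nat.Coprime.mul hav (Nat.coprime_of_mul_modEq_one w (by rw [mul_comm winv w]; exact hwinv))
      rw [Nat.gcd_comm, gcd_eq_of_modEq (Nat.mod_modEq (a * winv) v), Nat.gcd_comm]
      exact h1
  · -- backward membership
    intro p hp
    simp only [Finset.mem_product, Finset.mem_filter, Finset.mem_range] at hp
    obtain ⟨⟨hb, hbcop⟩, ⟨hc, hccop⟩⟩ := hp
    simp only [Finset.mem_filter, Finset.mem_range]
    refine ⟨Nat.mod_lt _ (Nat.mul_pos hw hv), ?_⟩
    have h1 : Nat.gcd w (p.1*v + p.2*w) = 1 := by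
      have hmod : p.1*v + p.2*w ≡ p.1*v [MOD w] := by
        simpa using (Nat.ModEq.refl (p.1*v)).add ((dvd_mul_left w p.2).modEq_zero_nat)
      rw [gcd_eq_of_modEq hmod]
      exact Nat.Coprime.mul_right (Nat.Coprime.symm hbcop) hwv
    have h2 : Nat.gcd v (p.1*v + p.2*w) = 1 := by
      have hmod : p.1*v + p.2*w ≡ p.2*w [MOD v] := by
        simpa using ((dvd_mul_left v p.1).modEq_zero_nat).add (Nat.ModEq.refl (p.2*w))
      rw [gcd_eq_of_modEq hmod]
      exact Nat.Coprime.mul_right (Nat.Coprime.symm hccop) hvw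
    rw [Nat.gcd_comm, gcd_eq_of_modEq (Nat.mod_modEq _ _)]
    exact Nat.Coprime.mul h1 h2
  · -- left inverse
    intro a ha
    simp only [Finset.mem_filter, Finset.mem_range] at ha
    have := key a ha.2
    unfold Nat.ModEq at this
    rw [this, Nat.mod_eq_of_lt ha.1]
  · -- right inverse
    intro p hp
    simp only [Finset.mem_product, Finset.mem_filter, Finset.mem_range] at hp
    obtain ⟨⟨hb, hbcop⟩, ⟨hc, hccop⟩⟩ := hp
    have hj : (p.1*v + p.2*w) % (w*v) ≡ p.1*v + p.2*w [MOD w*v] := Nat.mod_modEq _ _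
    have coord1 : ((p.1*v + p.2*w) % (w*v)) * vinv % w = p.1 := by
      have hjw : (p.1*v + p.2*w) % (w*v) ≡ p.1*v + p.2*w [MOD w] := hj.of_dvd (dvd_mul_right w v)
      have hchain : ((p.1*v + p.2*w) % (w*v)) * vinv ≡ p.1 [MOD w] := by
        calc ((p.1*v + p.2*w) % (w*v)) * vinv ≡ (p.1*v + p.2*w) * vinv [MOD w] :=
              hjw.mul_right vinv
        _ = p.1 * (v * vinv) + p.2 * vinv * w := by ring
        _ ≡ p.1 * 1 + 0 [MOD w] :=
              (hvinv.mul_left p.1).add ((dvd_mul_left w (p.2 * vinv)).modEq_zero_nat)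
        _ = p.1 := by ring
      unfold Nat.ModEq at hchain
      rw [hchain, Nat.mod_eq_of_lt hb]
    have coord2 : ((p.1*v + p.2*w) % (w*v)) * winv % v = p.2 := by
      have hjv : (p.1*v + p.2*w) % (w*v) ≡ p.1*v + p.2*w [MOD v] := hj.of_dvd (dvd_mul_left v w)
      have hchain : ((p.1*v + p.2*w) % (w*v)) * winv ≡ p.2 [MOD v] := by
        calc ((p.1*v + p.2*w) % (w*v)) * winv ≡ (p.1*v + p.2*w) * winv [MOD v] :=
              hjv.mul_right winv
        _ = p.2 * (w * winv) + p.1 * winv * v := by ring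
        _ ≡ p.2 * 1 + 0 [MOD v] :=
              (hwinv.mul_left p.2).add ((dvd_mul_left v (p.1 * winv)).modEq_zero_nat)
        _ = p.2 := by ring
      unfold Nat.ModEq at hchain
      rw [hchain, Nat.mod_eq_of_lt hc]
    exact Prod.ext coord1 coord2
  · -- summand identity
    intro a ha
    simp only [Finset.mem_filter, Finset.mem_range] at ha
    exact main a ha.2

/-- `f` is the Dirichlet convolution of `g` and `h`. -/
theorem f_eq_g_conv_h (m : ℤ) (q₀ : ℕ) (hq₀ : 0 < q₀) (hsf : Squarefree q₀)
    (R₀ : Finset ℤ) (q : ℕ) (hq : 0 < q) :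
    f m q₀ R₀ q = ∑ d ∈ q.divisors, g m q₀ R₀ d * h m q₀ (q / d) := by
  classical
  set w := Nat.gcd q q₀ with hwdef
  have hw : 0 < w := Nat.gcd_pos_of_pos_right q hq₀
  have hwq : w ∣ q := Nat.gcd_dvd_left q q₀
  have hwq₀ : w ∣ q₀ := Nat.gcd_dvd_right q q₀
  set v := q / w with hvdef
  have hq_eq : q = w * v := (Nat.mul_div_cancel' hwq).symm
  have hv : 0 < v := by
    rcases Nat.eq_zero_or_pos v with h0 | h0
    · rw [hq_eq, h0, mul_zero] at hq; exact absurd hq (lt_irrefl 0)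
    · exact h0
  by_cases hcase : Nat.gcd v q₀ = 1
  · -- main case
    have hvq : v ∣ q := ⟨w, by rw [hq_eq]; ring⟩
    -- collapse the RHS to the single term d = w
    have hRHS : ∑ d ∈ q.divisors, g m q₀ R₀ d * h m q₀ (q / d)
        = g m q₀ R₀ w * h m q₀ v := by
      have hmem : w ∈ q.divisors := Nat.mem_divisors.2 ⟨hwq, hq.ne'⟩
      rw [Finset.sum_eq_single_of_mem w hmem]
      intro d hd hdw
      rcases Nat.mem_divisors.1 hd with ⟨hdq, _⟩
      by_cases hdq₀ : d ∣ q₀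
      · have hdw' : d ∣ w := Nat.dvd_gcd hdq hdq₀
        have hd0 : 0 < d := Nat.pos_of_dvd_of_pos hdq hq
        have hwd1 : w / d ≠ 1 := by
          intro h1
          apply hdw
          have := Nat.mul_div_cancel' hdw'
          rw [h1, mul_one] at this
          exact this
        set p := (w/d).minFac with hpdef
        have hp : p.Prime := Nat.minFac_prime hwd1
        have hpwd : p ∣ w / d := Nat.minFac_dvd _
        have hpq₀ : p ∣ q₀ := hpwd.trans ((Nat.div_dvd_of_dvd hdw').trans hwq₀)
        have hqd_eq : q / d = v * (w / d) := by
          rw [hq_eq, mul_comm w v, Nat.mul_div_assoc v hdw']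
        have hpqd : p ∣ q / d := by rw [hqd_eq]; exact hpwd.mul_left v
        have hgt : 1 < Nat.gcd (q/d) q₀ := by
          have hpos : 0 < Nat.gcd (q/d) q₀ := Nat.gcd_pos_of_pos_right _ hq₀
          have hdvd : p ∣ Nat.gcd (q/d) q₀ := Nat.dvd_gcd hpqd hpq₀
          calc 1 < p := hp.one_lt
          _ ≤ Nat.gcd (q/d) q₀ := Nat.le_of_dvd hpos hdvd
        rw [h, if_pos hgt, mul_zero]
      · rw [g, if_neg hdq₀, zero_mul]
    rw [hRHS]
    -- expand f, g, h
    rw [f, g, if_pos hwq₀, h, if_neg (by rw [hcase]; exact lt_irrefl 1)]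
    -- convert all Icc sums to range sums
    have hfsum := sum_coprime_Icc_eq_range q hq
      (fun a => e (-((a : ℝ) * (m : ℝ) / (q : ℝ))) *
        (∑ ℓ ∈ Finset.range q₀,
          muphi ((q * q₀) / Nat.gcd (q * q₀) (a * q₀ + ℓ * q)) *
            ∑ r ∈ R₀, e (-((ℓ : ℝ) * (r : ℝ) / (q₀ : ℝ)))) ^ 3)
      (by
        intro a
        beta_reduce
        rw [e_neg_mod q hq m a]
        congr 2
        refine Finset.sum_congr rfl (fun ℓ _ => ?_)
        congr 2
        rw [gcd_eq_of_modEq (((Nat.mod_modEq a q).mul_right' q₀).add_right (ℓ * q))])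
    have hgsum := sum_coprime_Icc_eq_range w hw
      (fun a => e (-((a : ℝ) * (m : ℝ) / (w : ℝ))) *
        (∑ ℓ ∈ Finset.range q₀,
          muphi (q₀ / Nat.gcd q₀ (a * (q₀ / w) + ℓ)) *
            ∑ r ∈ R₀, e (-((ℓ : ℝ) * (r : ℝ) / (q₀ : ℝ)))) ^ 3)
      (by
        intro a
        beta_reduce
        rw [e_neg_mod w hw m a]
        congr 2
        refine Finset.sum_congr rfl (fun ℓ _ => ?_)
        congr 2
        have h1 : (a % w) * (q₀ / w) ≡ a * (q₀ / w) [MOD w * (q₀ / w)] :=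
          (Nat.mod_modEq a w).mul_right' (q₀ / w)
        rw [Nat.mul_div_cancel' hwq₀] at h1
        rw [gcd_eq_of_modEq (h1.add_right ℓ)])
    have hhsum := sum_coprime_Icc_eq_range v hv
      (fun a => e (-((a : ℝ) * (m : ℝ) / (v : ℝ))))
      (by intro a; beta_reduce; rw [e_neg_mod v hv m a])
    rw [hfsum, hgsum, hhsum]
    -- substitute q = w * v and apply the CRT identity
    rw [hq_eq]
    rw [crt_sum q₀ hq₀ m R₀ w v hw hv hwq₀ hcase]
    ring
  · -- degenerate case : both sides vanish
    have hp : ((Nat.gcd v q₀).minFac).Prime := Nat.minFac_prime hcase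
    set p := (Nat.gcd v q₀).minFac with hpdef
    have hpv : p ∣ v := (Nat.minFac_dvd _).trans (Nat.gcd_dvd_left _ _)
    have hpq₀ : p ∣ q₀ := (Nat.minFac_dvd _).trans (Nat.gcd_dvd_right _ _)
    have hvq : v ∣ q := ⟨w, by rw [hq_eq]; ring⟩
    have hpq : p ∣ q := hpv.trans hvq
    have hpw : p ∣ w := Nat.dvd_gcd hpq hpq₀
    have hp2q : p^2 ∣ q := by rw [hq_eq, sq]; exact mul_dvd_mul hpw hpv
    have hk2 : 2 ≤ q.factorization p := (hp.pow_dvd_iff_le_factorization hq.ne').1 hp2q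
    have hdq₀1 : q₀.factorization p = 1 := le_antisymm (hsf.natFactorization_le_one p)
        (hp.factorization_pos_of_dvd hq₀.ne' hpq₀)
    have hLHS : f m q₀ R₀ q = 0 := by
      rw [f, Finset.sum_eq_zero, mul_zero]
      intro a ha
      simp only [Finset.mem_filter, Finset.mem_Icc] at ha
      obtain ⟨⟨ha1, _⟩, hacop⟩ := ha
      have hpa : ¬ p ∣ a := by
        intro hpa
        have h1 : p ∣ 1 := hacop ▸ Nat.dvd_gcd hpa hpq
        exact hp.ne_one (Nat.dvd_one.mp h1)
      have hinner : (∑ ℓ ∈ Finset.range q₀,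
          muphi ((q * q₀) / Nat.gcd (q * q₀) (a * q₀ + ℓ * q)) *
            ∑ r ∈ R₀, e (-((ℓ : ℝ) * (r : ℝ) / (q₀ : ℝ)))) = 0 := by
        apply Finset.sum_eq_zero
        intro ℓ _
        have ha0 : a ≠ 0 := by omega
        have hx0 : a * q₀ + ℓ * q ≠ 0 := by
          have h1 : 0 < a * q₀ := Nat.mul_pos (by omega) hq₀
          omega
        have hN0 : q * q₀ ≠ 0 := (Nat.mul_pos hq hq₀).ne'
        have hxf : (a*q₀ + ℓ*q).factorization p = 1 := by
          have hpx : p ∣ a*q₀ + ℓ*q := dvd_add (hpq₀.mul_left a) (hpq.mul_left ℓ)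
          have hp2x : ¬ p^2 ∣ a*q₀ + ℓ*q := by
            intro h2
            have hp2lq : p^2 ∣ ℓ*q := hp2q.mul_left ℓ
            have hp2aq : p^2 ∣ a*q₀ := by
              have h3 := Nat.dvd_sub h2 hp2lq
              rwa [Nat.add_sub_cancel] at h3
            have h4 : 2 ≤ (a*q₀).factorization p :=
              (hp.pow_dvd_iff_le_factorization (Nat.mul_ne_zero ha0 hq₀.ne')).1 hp2aq
            rw [Nat.factorization_mul ha0 hq₀.ne'] at h4
            simp only [Finsupp.coe_add, Pi.add_apply] at h4
            rw [Nat.factorization_eq_zero_of_not_dvd hpa, hdq₀1] at h4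
            omega
          have h1 : 1 ≤ (a*q₀+ℓ*q).factorization p :=
            (hp.pow_dvd_iff_le_factorization hx0).1 (by simpa using hpx)
          have h2 : ¬ 2 ≤ (a*q₀+ℓ*q).factorization p := fun hle =>
            hp2x ((hp.pow_dvd_iff_le_factorization hx0).2 hle)
          omega
        have hdf : (Nat.gcd (q*q₀) (a*q₀+ℓ*q)).factorization p = 1 := by
          rw [Nat.factorization_gcd hN0 hx0]
          rw [Finsupp.inf_apply, hxf, Nat.factorization_mul hq.ne' hq₀.ne']
          simp only [Finsupp.coe_add, Pi.add_apply]
          omega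
        have hgdvd : Nat.gcd (q*q₀) (a*q₀+ℓ*q) ∣ q*q₀ := Nat.gcd_dvd_left _ _
        have hnf : 2 ≤ ((q*q₀) / Nat.gcd (q*q₀) (a*q₀+ℓ*q)).factorization p := by
          rw [Nat.factorization_div hgdvd]
          rw [Finsupp.tsub_apply, hdf, Nat.factorization_mul hq.ne' hq₀.ne']
          simp only [Finsupp.coe_add, Pi.add_apply]
          omega
        have hnsq : ¬ Squarefree ((q*q₀) / Nat.gcd (q*q₀) (a*q₀+ℓ*q)) := by
          intro hsq
          have h5 := hsq.natFactorization_le_one p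
          omega
        rw [muphi, ArithmeticFunction.moebius_eq_zero_of_not_squarefree hnsq]
        simp
      rw [hinner]
      simp
    rw [hLHS]
    symm
    apply Finset.sum_eq_zero
    intro d hd
    rcases Nat.mem_divisors.1 hd with ⟨hdq, _⟩
    by_cases hdq₀ : d ∣ q₀
    · have hd0 : d ≠ 0 := by
        rintro rfl
        rw [zero_dvd_iff] at hdq
        exact hq.ne' hdq
      have hqd0 : q / d ≠ 0 := (Nat.div_pos (Nat.le_of_dvd hq hdq) (Nat.pos_of_ne_zero hd0)).ne'
      have hdf1 : d.factorization p ≤ 1 :=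
        (Squarefree.squarefree_of_dvd hdq₀ hsf).natFactorization_le_one p
      have hpqd : p ∣ q / d := by
        have hqsplit : q = d * (q/d) := (Nat.mul_div_cancel' hdq).symm
        have h2 : 2 ≤ (d * (q/d)).factorization p := by rw [← hqsplit]; exact hk2
        rw [Nat.factorization_mul hd0 hqd0] at h2
        simp only [Finsupp.coe_add, Pi.add_apply] at h2
        have h3 : 1 ≤ (q/d).factorization p := by omega
        have h4 := (hp.pow_dvd_iff_le_factorization hqd0).2 h3
        rwa [pow_one] at h4
      have hgt : 1 < Nat.gcd (q/d) q₀ := by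
        have hpos : 0 < Nat.gcd (q/d) q₀ := Nat.gcd_pos_of_pos_right _ hq₀
        have hdvd : p ∣ Nat.gcd (q/d) q₀ := Nat.dvd_gcd hpqd hpq₀
        calc 1 < p := hp.one_lt
        _ ≤ Nat.gcd (q/d) q₀ := Nat.le_of_dvd hpos hdvd
      rw [h, if_pos hgt, mul_zero]
    · rw [g, if_neg hdq₀, zero_mul]
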